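/- For all n ≥ 4, the graph A_n, obtained from the complete graph K₄ minus one edge by attaching a path P_{n−3} at a vertex of degree 2 (identifying one endvertex of the path with that vertex), satisfies N(A_n) = (n² + 7n − 16)/2. -/

import Mathlib

open SimpleGraph

/-- Number of connected sets (nonempty vertex subsets inducing a connected subgraph). -/
noncomputable def numConnSets {V : Type*} [Fintype V] (G : SimpleGraph V) : ℕ :=
  Nat.card {s : Finset V // (G.induce (↑s : Set V)).Connected}

/-- Number of connected sets containing the vertex `v`. -/
noncomputable def numConnSetsAt {V : Type*} [Fintype V] (G : SimpleGraph V) (v : V) : ℕ :=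
  Nat.card {s : Finset V // v ∈ s ∧ (G.induce (↑s : Set V)).Connected}

/-- A graph is bicyclic if it is connected and has one more edge than vertices. -/
def Bicyclic {V : Type*} [Fintype V] (G : SimpleGraph V) : Prop :=
  G.Connected ∧ Nat.card G.edgeSet = Fintype.card V + 1

/-- The tadpole graph `D_m`: a triangle on vertices `0,1,2` with the path
`2,3,…,m-1` attached. -/
def tadpoleGraph (m : ℕ) : SimpleGraph (Fin m) :=
  SimpleGraph.fromRel (fun i j =>
    ((i : ℕ) = 0 ∧ (j : ℕ) = 1) ∨ ((i : ℕ) = 0 ∧ (j : ℕ) = 2) ∨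
    ((i : ℕ) = 1 ∧ (j : ℕ) = 2) ∨ (2 ≤ (i : ℕ) ∧ (j : ℕ) = (i : ℕ) + 1))

/-- The graph `L_n = G[3,3,n-4]`: triangles on `{0,1,2}` and `{n-3,n-2,n-1}`
joined by the path `2,3,…,n-3`. -/
def Lgraph (n : ℕ) : SimpleGraph (Fin n) :=
  SimpleGraph.fromRel (fun i j =>
    ((i : ℕ) = 0 ∧ (j : ℕ) = 1) ∨ ((i : ℕ) = 0 ∧ (j : ℕ) = 2) ∨
    ((i : ℕ) = 1 ∧ (j : ℕ) = 2) ∨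
    (2 ≤ (i : ℕ) ∧ (j : ℕ) = (i : ℕ) + 1 ∧ (j : ℕ) ≤ n - 3) ∨
    ((i : ℕ) = n - 3 ∧ (j : ℕ) = n - 2) ∨ ((i : ℕ) = n - 3 ∧ (j : ℕ) = n - 1) ∨
    ((i : ℕ) = n - 2 ∧ (j : ℕ) = n - 1))

/-- The graph `A_n`: `K₄` minus an edge on `{0,1,2,3}` (missing edge `0-3`,
so `3` has degree `2`) with the path `3,4,…,n-1` attached at `3`. -/
def Agraph (n : ℕ) : SimpleGraph (Fin n) :=
  SimpleGraph.fromRel (fun i j =>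
    ((i : ℕ) = 0 ∧ (j : ℕ) = 1) ∨ ((i : ℕ) = 0 ∧ (j : ℕ) = 2) ∨
    ((i : ℕ) = 1 ∧ (j : ℕ) = 2) ∨ ((i : ℕ) = 1 ∧ (j : ℕ) = 3) ∨
    ((i : ℕ) = 2 ∧ (j : ℕ) = 3) ∨ (3 ≤ (i : ℕ) ∧ (j : ℕ) = (i : ℕ) + 1))

/-- The graph `R_n`: vertex `0 = w` adjacent to all other vertices, with extra
edges `1-2` and `3-4` forming two triangles through `w`; the remaining `n-5`
neighbours of `w` are leaves. -/
def Rgraph (n : ℕ) : SimpleGraph (Fin n) :=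
  SimpleGraph.fromRel (fun i j =>
    ((i : ℕ) = 0 ∧ (j : ℕ) ≠ 0) ∨ ((i : ℕ) = 1 ∧ (j : ℕ) = 2) ∨
    ((i : ℕ) = 3 ∧ (j : ℕ) = 4))

/-- The graph `B_n`: `K₄` minus an edge on `{0,1,2,3}` (missing edge `0-3`,
so `1` has degree `3`) with `n-4` pendant edges `1-4, 1-5, …, 1-(n-1)`
attached at the degree-3 vertex `1`. -/
def Bgraph (n : ℕ) : SimpleGraph (Fin n) :=
  SimpleGraph.fromRel (fun i j =>
    ((i : ℕ) = 0 ∧ (j : ℕ) = 1) ∨ ((i : ℕ) = 0 ∧ (j : ℕ) = 2) ∨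
    ((i : ℕ) = 1 ∧ (j : ℕ) = 2) ∨ ((i : ℕ) = 1 ∧ (j : ℕ) = 3) ∨
    ((i : ℕ) = 2 ∧ (j : ℕ) = 3) ∨ ((i : ℕ) = 1 ∧ 4 ≤ (j : ℕ)))
section SepAux

open SimpleGraph

variable {V : Type*} {G : SimpleGraph V}

private lemma walk_cross (p : V → Prop) :
    ∀ {u v : V}, G.Walk u v → p u → ¬ p v → ∃ a b, G.Adj a b ∧ p a ∧ ¬ p b := by
  intro u v w
  induction w with
  | nil => intro h1 h2; exact absurd h1 h2
  | @cons u b v h q ih =>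
    intro h1 h2
    by_cases hb : p b
    · exact ih hb h2
    · exact ⟨u, b, h, h1, hb⟩

private lemma connected_induce_iff_sep (G : SimpleGraph V) (s : Set V) :
    (G.induce s).Connected ↔ s.Nonempty ∧ ∀ A ⊆ s, A.Nonempty → (s \ A).Nonempty →
      ∃ a ∈ A, ∃ b ∈ s \ A, G.Adj a b := by
  constructor
  · intro h
    obtain ⟨u⟩ := h.nonempty
    refine ⟨⟨u.1, u.2⟩, ?_⟩
    rintro A hAs ⟨a, ha⟩ ⟨b, hbs, hbA⟩
    obtain ⟨w⟩ := h.preconnected ⟨a, hAs ha⟩ ⟨b, hbs⟩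
    obtain ⟨x, y, hxy, hx, hy⟩ :=
      walk_cross (G := G.induce s) (fun z => (z : V) ∈ A) w ha hbA
    exact ⟨x, hx, y, ⟨y.2, hy⟩, hxy⟩
  · rintro ⟨⟨u, hu⟩, hsep⟩
    have hne : Nonempty s := ⟨⟨u, hu⟩⟩
    refine ⟨?_⟩
    intro x y
    by_contra hxy
    have hAs : {z | ∃ hz : z ∈ s, (G.induce s).Reachable x ⟨z, hz⟩} ⊆ s := fun z hz => hz.1
    obtain ⟨a, ha, b, hb, hab⟩ := hsep _ hAs
      ⟨x.1, x.2, by rw [Subtype.coe_eta]⟩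
      ⟨y.1, y.2, fun hmem => by
        obtain ⟨h1, h2⟩ := hmem
        rw [Subtype.coe_eta] at h2
        exact hxy h2⟩
    obtain ⟨has, hr⟩ := ha
    exact hb.2 ⟨hb.1, hr.trans (SimpleGraph.Adj.reachable (by exact hab))⟩

private lemma conn_of_hub (G : SimpleGraph V) {s : Set V} {h : V} (hh : h ∈ s)
    (hub : ∀ x ∈ s, x = h ∨ G.Adj h x) : (G.induce s).Connected := by
  rw [connected_induce_iff_sep]
  refine ⟨⟨h, hh⟩, ?_⟩
  rintro A hAs ⟨a, ha⟩ ⟨b, hbs, hbA⟩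
  by_cases hA : h ∈ A
  · rcases hub b hbs with rfl | hadj
    · exact absurd hA hbA
    · exact ⟨h, hA, b, ⟨hbs, hbA⟩, hadj⟩
  · rcases hub a (hAs ha) with rfl | hadj
    · exact absurd ha hA
    · exact ⟨a, ha, h, ⟨hh, hA⟩, hadj.symm⟩

private lemma conn_insert (G : SimpleGraph V) {s : Set V} {v u : V} (hv : v ∉ s) (hu : u ∈ s)
    (hadj : G.Adj u v) (h : (G.induce s).Connected) : (G.induce (insert v s)).Connected := by
  rw [connected_induce_iff_sep] at h ⊢
  obtain ⟨hne, hsep⟩ := h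
  refine ⟨⟨v, Set.mem_insert _ _⟩, ?_⟩
  rintro A hAs ⟨a0, ha0⟩ ⟨b0, hb0i, hb0A⟩
  by_cases hsA : ∀ x ∈ s, x ∈ A
  · have hb0 : b0 = v := by
      rcases Set.mem_insert_iff.1 hb0i with h' | h'
      · exact h'
      · exact absurd (hsA _ h') hb0A
    subst hb0
    exact ⟨u, hsA u hu, b0, ⟨Set.mem_insert _ _, hb0A⟩, hadj⟩
  · push_neg at hsA
    obtain ⟨w, hws, hwA⟩ := hsA
    by_cases hA' : ∃ x ∈ A, x ≠ v
    · obtain ⟨a1, ha1A, ha1v⟩ := hA'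
      have hsubA : A \ {v} ⊆ s := by
        rintro x ⟨hx1, hx2⟩
        rcases Set.mem_insert_iff.1 (hAs hx1) with h' | h'
        · exact absurd h' hx2
        · exact h'
      obtain ⟨a, ha, b, ⟨hbs, hbA⟩, hab⟩ := hsep (A \ {v}) hsubA
        ⟨a1, ha1A, ha1v⟩ ⟨w, hws, fun hw => hwA hw.1⟩
      refine ⟨a, ha.1, b, ⟨Set.mem_insert_of_mem _ hbs, fun hbA2 => hbA ⟨hbA2, ?_⟩⟩, hab⟩
      intro hbv
      rw [Set.mem_singleton_iff] at hbv
      exact hv (hbv ▸ hbs)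
    · push_neg at hA'
      have hva : v ∈ A := (hA' a0 ha0) ▸ ha0
      have huA : u ∉ A := fun hc => hv ((hA' u hc) ▸ hu)
      exact ⟨v, hva, u, ⟨Set.mem_insert_of_mem _ hu, huA⟩, hadj.symm⟩

private lemma conn_erase (G : SimpleGraph V) {s : Set V} {v u : V} (hvs : v ∈ s) (hus : u ∈ s)
    (huv : u ≠ v) (hnbr : ∀ x ∈ s, G.Adj v x → x = u) (h : (G.induce s).Connected) :
    (G.induce (s \ {v})).Connected := by
  rw [connected_induce_iff_sep] at h ⊢
  obtain ⟨-, hsep⟩ := h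
  refine ⟨⟨u, hus, huv⟩, ?_⟩
  rintro A hAs ⟨a0, ha0⟩ ⟨b0, hb0⟩
  by_cases huA : u ∈ A
  · obtain ⟨a, ha, b, ⟨hbs, hbA⟩, hab⟩ := hsep (A ∪ {v})
      (fun x hx => by
        rcases hx with hx | hx
        · exact (hAs hx).1
        · rw [Set.mem_singleton_iff] at hx; exact hx ▸ hvs)
      ⟨a0, Or.inl ha0⟩
      ⟨b0, hb0.1.1, fun hb => by
        rcases hb with hb | hb
        · exact hb0.2 hb
        · exact hb0.1.2 hb⟩
    rcases ha with haA | hav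
    · exact ⟨a, haA, b, ⟨⟨hbs, fun hb => hbA (Or.inr hb)⟩, fun hb => hbA (Or.inl hb)⟩, hab⟩
    · exfalso
      rw [Set.mem_singleton_iff] at hav
      have hbu : b = u := hnbr b hbs (hav ▸ hab)
      exact hbA (Or.inl (hbu ▸ huA))
  · obtain ⟨a, ha, b, ⟨hbs, hbA⟩, hab⟩ := hsep A (fun x hx => (hAs hx).1) ⟨a0, ha0⟩
      ⟨v, hvs, fun hv' => absurd rfl (hAs hv').2⟩
    by_cases hbv : b = v
    · exfalso
      have hau : a = u := hnbr a (hAs ha).1 (hbv ▸ hab.symm)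
      exact huA (hau ▸ ha)
    · exact ⟨a, ha, b, ⟨⟨hbs, hbv⟩, hbA⟩, hab⟩

end SepAux

section AgraphAux

open SimpleGraph

/-- The adjacency-defining relation of `Agraph` on natural numbers. -/
private def ArelN (a b : ℕ) : Prop :=
  (a = 0 ∧ b = 1) ∨ (a = 0 ∧ b = 2) ∨ (a = 1 ∧ b = 2) ∨ (a = 1 ∧ b = 3) ∨
  (a = 2 ∧ b = 3) ∨ (3 ≤ a ∧ b = a + 1)

private instance (a b : ℕ) : Decidable (ArelN a b) := by unfold ArelN; infer_instance

private lemma agraph_adj {m : ℕ} (a b : Fin m) :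
    (Agraph m).Adj a b ↔ a.val ≠ b.val ∧ (ArelN a.val b.val ∨ ArelN b.val a.val) := by
  simp only [Agraph, fromRel_adj, ArelN, ne_eq, Fin.ext_iff]

private instance {m : ℕ} : DecidableRel (Agraph m).Adj := fun a b =>
  decidable_of_iff _ (agraph_adj a b).symm

private lemma last_not_mem_map {n : ℕ} (s : Finset (Fin n)) :
    Fin.last n ∉ s.map Fin.castSuccEmb := by
  simp only [Finset.mem_map]
  rintro ⟨i, hi, hcast⟩
  have h := congrArg Fin.val hcast
  have h2 : ((Fin.castSuccEmb i : Fin (n+1))).val = i.val := rfl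
  rw [h2, Fin.val_last] at h
  have h3 := i.2
  omega

private lemma exists_map_eq {n : ℕ} (t : Finset (Fin (n+1)))
    (h : Fin.last n ∉ t) : ∃ s : Finset (Fin n), s.map Fin.castSuccEmb = t := by
  classical
  refine ⟨Finset.univ.filter fun i : Fin n => i.castSucc ∈ t, ?_⟩
  ext x
  simp only [Finset.mem_map, Finset.mem_filter, Finset.mem_univ, true_and]
  constructor
  · rintro ⟨i, hit, rfl⟩
    exact hit
  · intro hx
    have hxn : x.val < n := by
      by_contra h'
      push_neg at h'
      have h2 := x.2
      have hxl : x = Fin.last n := Fin.ext (by simp only [Fin.val_last]; omega)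
      exact h (hxl ▸ hx)
    refine ⟨⟨x.val, hxn⟩, ?_, Fin.ext rfl⟩
    have hcast : ((⟨x.val, hxn⟩ : Fin n).castSucc : Fin (n+1)) = x := Fin.ext rfl
    rw [hcast]
    exact hx

private lemma conn_map_iff {n : ℕ} (s : Finset (Fin n)) :
    ((Agraph (n+1)).induce (↑(s.map Fin.castSuccEmb) : Set (Fin (n+1)))).Connected ↔
      ((Agraph n).induce (↑s : Set (Fin n))).Connected := by
  have f : ∀ x : (↑s : Set (Fin n)), ((x : Fin n).castSucc : Fin (n+1)) ∈
      (↑(s.map Fin.castSuccEmb) : Set (Fin (n+1))) := by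
    intro x
    simp only [Finset.coe_map, Set.mem_image, Finset.mem_coe]
    exact ⟨x.1, x.2, rfl⟩
  refine (SimpleGraph.Iso.connected_iff
    ⟨Equiv.ofBijective (fun x => ⟨(x : Fin n).castSucc, f x⟩) ⟨?_, ?_⟩, ?_⟩).symm
  · intro a b h
    apply Subtype.ext
    have h2 := congrArg Subtype.val h
    simpa using h2
  · rintro ⟨y, hy⟩
    simp only [Finset.coe_map, Set.mem_image, Finset.mem_coe] at hy
    obtain ⟨i, hi, hie⟩ := hy
    exact ⟨⟨i, hi⟩, Subtype.ext (by simpa using hie)⟩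
  · intro a b
    simp only [Equiv.ofBijective_apply, comap_adj, Function.Embedding.coe_subtype,
      agraph_adj, Fin.coe_castSucc]
    exact Iff.rfl

end AgraphAux

section LeafAux

open SimpleGraph

private lemma adj_last_iff {m : ℕ} (hm : 3 ≤ m) (x : Fin (m+2)) :
    (Agraph (m+2)).Adj (Fin.last (m+1)) x ↔ x = (Fin.last m).castSucc := by
  rw [agraph_adj]
  have hx := x.2
  simp only [ArelN, Fin.ext_iff, Fin.val_last, Fin.coe_castSucc]
  omega

private lemma leaf_char {m : ℕ} (hm : 3 ≤ m) (s : Finset (Fin (m+2)))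
    (hls : Fin.last (m+1) ∈ s) :
    ((Agraph (m+2)).induce (↑s : Set (Fin (m+2)))).Connected ↔
      s = {Fin.last (m+1)} ∨
        ((Fin.last m).castSucc ∈ s ∧
          ((Agraph (m+2)).induce (↑(s.erase (Fin.last (m+1))) : Set (Fin (m+2)))).Connected) := by
  have hPL : (Fin.last m).castSucc ≠ Fin.last (m+1) := by
    simp [Fin.ext_iff]
  have hadjPL : (Agraph (m+2)).Adj ((Fin.last m).castSucc) (Fin.last (m+1)) :=
    ((adj_last_iff hm _).2 rfl).symm
  constructor
  · intro hconn
    by_cases hs : s = {Fin.last (m+1)}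
    · exact Or.inl hs
    right
    obtain ⟨w, hws, hwl⟩ : ∃ w ∈ s, w ≠ Fin.last (m+1) := by
      by_contra hc
      push_neg at hc
      exact hs (Finset.eq_singleton_iff_unique_mem.2 ⟨hls, hc⟩)
    have hPs : (Fin.last m).castSucc ∈ s := by
      by_contra hP
      rw [connected_induce_iff_sep] at hconn
      obtain ⟨a, ha, b, hb, hab⟩ := hconn.2 {Fin.last (m+1)}
        (by rw [Set.singleton_subset_iff]; exact Finset.mem_coe.2 hls)
        ⟨Fin.last (m+1), rfl⟩
        ⟨w, Finset.mem_coe.2 hws, fun hwm => hwl (Set.mem_singleton_iff.1 hwm)⟩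
      rw [Set.mem_singleton_iff] at ha
      subst ha
      have hb2 := (adj_last_iff hm b).1 hab
      subst hb2
      exact hP (Finset.mem_coe.1 hb.1)
    refine ⟨hPs, ?_⟩
    have hres := conn_erase (Agraph (m+2)) (s := (↑s : Set (Fin (m+2))))
      (v := Fin.last (m+1)) (u := (Fin.last m).castSucc)
      (Finset.mem_coe.2 hls) (Finset.mem_coe.2 hPs) hPL
      (fun x hx hadj => (adj_last_iff hm x).1 hadj) hconn
    rwa [← Finset.coe_erase] at hres
  · rintro (rfl | ⟨hPs, hc⟩)
    · rw [Finset.coe_singleton]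
      exact conn_of_hub _ rfl (fun x hx => Or.inl hx)
    · have h1 := conn_insert (Agraph (m+2))
        (s := (↑(s.erase (Fin.last (m+1))) : Set (Fin (m+2))))
        (v := Fin.last (m+1)) (u := (Fin.last m).castSucc)
        (by simp) (Finset.mem_coe.2 (Finset.mem_erase.2 ⟨hPL, hPs⟩)) hadjPL hc
      rwa [← Finset.coe_insert, Finset.insert_erase hls] at h1

private lemma numConnSets_succ (n : ℕ) :
    numConnSets (Agraph (n+1)) =
      numConnSets (Agraph n) + numConnSetsAt (Agraph (n+1)) (Fin.last n) := by
  classical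
  have e : {t : Finset (Fin n) // ((Agraph n).induce (↑t : Set (Fin n))).Connected} ⊕
      {s : Finset (Fin (n+1)) // Fin.last n ∈ s ∧
        ((Agraph (n+1)).induce (↑s : Set (Fin (n+1)))).Connected}
      ≃ {s : Finset (Fin (n+1)) // ((Agraph (n+1)).induce (↑s : Set (Fin (n+1)))).Connected} := by
    refine Equiv.ofBijective
      (Sum.elim (fun t => ⟨t.1.map Fin.castSuccEmb, (conn_map_iff t.1).2 t.2⟩)
        (fun s => ⟨s.1, s.2.2⟩)) ⟨?_, ?_⟩
    · rintro (a | a) (b | b) h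
      · have hv := congrArg Subtype.val h
        simp only [Sum.elim_inl] at hv
        exact congrArg Sum.inl (Subtype.ext (Finset.map_injective _ hv))
      · exfalso
        have hv := congrArg Subtype.val h
        simp only [Sum.elim_inl, Sum.elim_inr] at hv
        exact last_not_mem_map a.1 (by rw [hv]; exact b.2.1)
      · exfalso
        have hv := congrArg Subtype.val h
        simp only [Sum.elim_inl, Sum.elim_inr] at hv
        exact last_not_mem_map b.1 (by rw [← hv]; exact a.2.1)
      · have hv := congrArg Subtype.val h
        simp only [Sum.elim_inr] at hv
        exact congrArg Sum.inr (Subtype.ext hv)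
    · rintro ⟨s, hs⟩
      by_cases hl : Fin.last n ∈ s
      · exact ⟨Sum.inr ⟨s, hl, hs⟩, rfl⟩
      · obtain ⟨t, ht⟩ := exists_map_eq s hl
        refine ⟨Sum.inl ⟨t, (conn_map_iff t).1 ?_⟩, Subtype.ext ht⟩
        rw [ht]
        exact hs
  have hcard := Nat.card_congr e
  rw [Nat.card_sum] at hcard
  rw [numConnSets, numConnSets, numConnSetsAt]
  omega

private lemma numConnSetsAt_succ (m : ℕ) (hm : 3 ≤ m) :
    numConnSetsAt (Agraph (m+2)) (Fin.last (m+1)) =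
      numConnSetsAt (Agraph (m+1)) (Fin.last m) + 1 := by
  classical
  have hPL : (Fin.last m).castSucc ≠ Fin.last (m+1) := by simp [Fin.ext_iff]
  have e : Option {t : Finset (Fin (m+1)) // Fin.last m ∈ t ∧
        ((Agraph (m+1)).induce (↑t : Set (Fin (m+1)))).Connected}
      ≃ {s : Finset (Fin (m+2)) // Fin.last (m+1) ∈ s ∧
        ((Agraph (m+2)).induce (↑s : Set (Fin (m+2)))).Connected} := by
    have hmemP : ∀ t : Finset (Fin (m+1)), Fin.last m ∈ t →
        (Fin.last m).castSucc ∈ t.map Fin.castSuccEmb := by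
      intro t ht
      exact Finset.mem_map.2 ⟨Fin.last m, ht, Fin.ext rfl⟩
    have hconn : ∀ t : Finset (Fin (m+1)), Fin.last m ∈ t →
        ((Agraph (m+1)).induce (↑t : Set (Fin (m+1)))).Connected →
        ((Agraph (m+2)).induce
          (↑(insert (Fin.last (m+1)) (t.map Fin.castSuccEmb)) : Set (Fin (m+2)))).Connected := by
      intro t ht hc
      rw [leaf_char hm _ (Finset.mem_insert_self _ _)]
      right
      refine ⟨Finset.mem_insert_of_mem (hmemP t ht), ?_⟩
      rw [Finset.erase_insert (last_not_mem_map t)]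
      exact (conn_map_iff t).2 hc
    refine Equiv.ofBijective (fun o => o.elim
      ⟨{Fin.last (m+1)}, Finset.mem_singleton_self _, by
        rw [Finset.coe_singleton]
        exact conn_of_hub _ rfl (fun x hx => Or.inl hx)⟩
      (fun t => ⟨insert (Fin.last (m+1)) (t.1.map Fin.castSuccEmb),
        Finset.mem_insert_self _ _, hconn t.1 t.2.1 t.2.2⟩)) ⟨?_, ?_⟩
    · rintro (_ | a) (_ | b) h
      · rfl
      · exfalso
        have hv := congrArg Subtype.val h
        simp only [Option.elim] at hv
        have hmem : (Fin.last m).castSucc ∈ ({Fin.last (m+1)} : Finset (Fin (m+2))) := by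
          rw [hv]
          exact Finset.mem_insert_of_mem (hmemP b.1 b.2.1)
        exact hPL (Finset.mem_singleton.1 hmem)
      · exfalso
        have hv := congrArg Subtype.val h
        simp only [Option.elim] at hv
        have hmem : (Fin.last m).castSucc ∈ ({Fin.last (m+1)} : Finset (Fin (m+2))) := by
          rw [← hv]
          exact Finset.mem_insert_of_mem (hmemP a.1 a.2.1)
        exact hPL (Finset.mem_singleton.1 hmem)
      · have hv := congrArg Subtype.val h
        simp only [Option.elim] at hv
        have h2 : a.1.map Fin.castSuccEmb = b.1.map Fin.castSuccEmb := by
          have := congrArg (fun u => Finset.erase u (Fin.last (m+1))) hv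
          simpa [Finset.erase_insert (last_not_mem_map a.1),
            Finset.erase_insert (last_not_mem_map b.1)] using this
        exact congrArg Option.some (Subtype.ext (Finset.map_injective _ h2))
    · rintro ⟨s, hl, hs⟩
      rcases (leaf_char hm s hl).1 hs with hsing | ⟨hPs, hce⟩
      · exact ⟨none, Subtype.ext hsing.symm⟩
      · obtain ⟨t, ht⟩ := exists_map_eq (s.erase (Fin.last (m+1))) (Finset.notMem_erase _ _)
        have htP : Fin.last m ∈ t := by
          have hmem : (Fin.last m).castSucc ∈ t.map Fin.castSuccEmb := by
            rw [ht]
            exact Finset.mem_erase.2 ⟨hPL, hPs⟩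
          obtain ⟨i, hi, hie⟩ := Finset.mem_map.1 hmem
          have : i = Fin.last m := by
            apply Fin.ext
            have := congrArg Fin.val hie
            simpa [Fin.castSuccEmb] using this
          exact this ▸ hi
        have htc : ((Agraph (m+1)).induce (↑t : Set (Fin (m+1)))).Connected := by
          apply (conn_map_iff t).1
          rw [ht]
          exact hce
        refine ⟨some ⟨t, htP, htc⟩, Subtype.ext ?_⟩
        show insert (Fin.last (m+1)) (t.map Fin.castSuccEmb) = s
        rw [ht, Finset.insert_erase hl]
  have hcard := Nat.card_congr e
  rw [Finite.card_option] at hcard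
  rw [numConnSetsAt, numConnSetsAt]
  omega

end LeafAux

section BaseAux

open SimpleGraph

private def L14 : Finset (Finset (Fin 4)) :=
  { {0}, {1}, {2}, {3}, {0,1}, {0,2}, {1,2}, {1,3}, {2,3},
    {0,1,2}, {0,1,3}, {0,2,3}, {1,2,3}, {0,1,2,3} }

private def L7 : Finset (Finset (Fin 4)) :=
  { {3}, {1,3}, {2,3}, {0,1,3}, {0,2,3}, {1,2,3}, {0,1,2,3} }

private lemma conn4_iff (s : Finset (Fin 4)) :
    ((Agraph 4).induce (↑s : Set (Fin 4))).Connected ↔ s ∈ L14 := by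
  constructor
  · intro h
    by_contra hs
    have hgen : ∀ t : Finset (Fin 4), t ∉ L14 → t = ∅ ∨ t = ({0,3} : Finset (Fin 4)) := by
      decide
    have h2 := hgen s hs
    rcases h2 with rfl | rfl
    · obtain ⟨⟨x, hx⟩⟩ := h.nonempty
      simp at hx
    · rw [connected_induce_iff_sep] at h
      obtain ⟨a, ha, b, hb, hab⟩ := h.2 {(0 : Fin 4)}
        (by
          intro x hx
          rw [Set.mem_singleton_iff] at hx
          subst hx
          simp)
        ⟨0, rfl⟩
        ⟨3, by simp, by
          rw [Set.mem_singleton_iff]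
          decide⟩
      rw [Set.mem_singleton_iff] at ha
      subst ha
      have hb3 : b = 3 := by
        have hb1 := Finset.mem_coe.1 hb.1
        have hb2 := hb.2
        rw [Set.mem_singleton_iff] at hb2
        revert hb1 hb2
        revert b
        decide
      subst hb3
      exact absurd hab (by decide)
  · intro hs
    have hgen : ∀ t : Finset (Fin 4), t ∈ L14 → ∃ h ∈ t, ∀ x ∈ t, x = h ∨ (Agraph 4).Adj h x := by
      decide
    have h2 := hgen s hs
    obtain ⟨h, hh, hub⟩ := h2
    exact conn_of_hub _ (Finset.mem_coe.2 hh) (fun x hx => hub x (Finset.mem_coe.1 hx))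

private lemma base14 : numConnSets (Agraph 4) = 14 := by
  rw [numConnSets, Nat.card_congr (Equiv.subtypeEquivRight conn4_iff),
    Nat.card_eq_fintype_card, Fintype.card_coe]
  decide

private lemma base7 : numConnSetsAt (Agraph 4) (Fin.last 3) = 7 := by
  rw [numConnSetsAt]
  have key : ∀ s : Finset (Fin 4),
      (Fin.last 3 ∈ s ∧ ((Agraph 4).induce (↑s : Set (Fin 4))).Connected) ↔ s ∈ L7 := by
    intro s
    rw [conn4_iff]
    revert s
    decide
  rw [Nat.card_congr (Equiv.subtypeEquivRight key), Nat.card_eq_fintype_card, Fintype.card_coe]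
  decide

private lemma atLast_eq (k : ℕ) :
    numConnSetsAt (Agraph (k+4)) (Fin.last (k+3)) = k + 7 := by
  induction k with
  | zero => exact base7
  | succ k ih =>
    show numConnSetsAt (Agraph ((k+3)+2)) (Fin.last ((k+3)+1)) = (k+7)+1
    rw [numConnSetsAt_succ (k+3) (by omega)]
    have ih' : numConnSetsAt (Agraph (k+3+1)) (Fin.last (k+3)) = k + 7 := ih
    rw [ih']

private lemma numConnSets_eq (k : ℕ) :
    numConnSets (Agraph (k+4)) * 2 = (k+4)^2 + 7*(k+4) - 16 := by
  induction k with
  | zero =>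
    rw [base14]
    norm_num
  | succ k ih =>
    show numConnSets (Agraph ((k+4)+1)) * 2 = ((k+4)+1)^2 + 7*((k+4)+1) - 16
    rw [numConnSets_succ (k+4)]
    have hg : numConnSetsAt (Agraph ((k+4)+1)) (Fin.last (k+4)) = (k+1) + 7 := atLast_eq (k+1)
    rw [hg]
    have e1 : ((k+4)+1)^2 = (k+4)^2 + 2*(k+4) + 1 := by ring
    have e2 : 16 ≤ (k+4)^2 + 7*(k+4) := by nlinarith
    omega

end BaseAux

theorem numConnSets_Agraph (n : ℕ) (hn : 4 ≤ n) :
    numConnSets (Agraph n) = (n ^ 2 + 7 * n - 16) / 2 := by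
  have h := numConnSets_eq (n - 4)
  have hn4 : n - 4 + 4 = n := by omega
  rw [hn4] at h
  have e2 : 16 ≤ n^2 + 7*n := by nlinarith
  omega
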